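/- Let f = x₁³x₃ + x₁³x₂ + x₂²x₃² and g = x₁x₃ + x₂x₃ + x₁x₂. Then there is no nonnegative homogeneous polynomial t ∈ ℝ[x₁,x₂,x₃] of degree 2 such that f(y) − t(y)g(y) ≥ 0 for all y ∈ ℝ³. -/

import Mathlib

open MvPolynomial Finsupp

noncomputable def MM (i j k : ℕ) : Fin 3 →₀ ℕ := single 0 i + single 1 j + single 2 k

lemma MM_apply0 (i j k : ℕ) : MM i j k 0 = i := by simp [MM, single_apply]
lemma MM_apply1 (i j k : ℕ) : MM i j k 1 = j := by simp [MM, single_apply]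
lemma MM_apply2 (i j k : ℕ) : MM i j k 2 = k := by simp [MM, single_apply]

lemma eq_MM (d : Fin 3 →₀ ℕ) : d = MM (d 0) (d 1) (d 2) := by
  ext a; fin_cases a <;> simp [MM_apply0, MM_apply1, MM_apply2, MM, single_apply]

lemma MM_eq_iff {i j k i' j' k' : ℕ} : MM i j k = MM i' j' k' ↔ i = i' ∧ j = j' ∧ k = k' := by
  constructor
  · intro h
    exact ⟨by simpa [MM_apply0] using DFunLike.congr_fun h 0,
      by simpa [MM_apply1] using DFunLike.congr_fun h 1,
      by simpa [MM_apply2] using DFunLike.congr_fun h 2⟩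
  · rintro ⟨rfl, rfl, rfl⟩; rfl

lemma degree_MM (i j k : ℕ) : (MM i j k).degree = i + j + k := by
  rw [degree_eq_weight_one]
  simp [MM, weight_apply, Finsupp.sum_add_index, Finsupp.sum_single_index]

lemma decomp (t : MvPolynomial (Fin 3) ℝ) (ht : t.IsHomogeneous 2) :
    t = monomial (MM 2 0 0) (coeff (MM 2 0 0) t) + monomial (MM 1 1 0) (coeff (MM 1 1 0) t)
      + monomial (MM 1 0 1) (coeff (MM 1 0 1) t) + monomial (MM 0 2 0) (coeff (MM 0 2 0) t)
      + monomial (MM 0 1 1) (coeff (MM 0 1 1) t)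
      + monomial (MM 0 0 2) (coeff (MM 0 0 2) t) := by
  ext d
  rw [eq_MM d]
  set n0 := d 0; set n1 := d 1; set n2 := d 2
  by_cases h : n0 + n1 + n2 = 2
  · have h6 : (n0 = 2 ∧ n1 = 0 ∧ n2 = 0) ∨ (n0 = 1 ∧ n1 = 1 ∧ n2 = 0)
      ∨ (n0 = 1 ∧ n1 = 0 ∧ n2 = 1) ∨ (n0 = 0 ∧ n1 = 2 ∧ n2 = 0)
      ∨ (n0 = 0 ∧ n1 = 1 ∧ n2 = 1) ∨ (n0 = 0 ∧ n1 = 0 ∧ n2 = 2) := by omega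
    rcases h6 with ⟨h0,h1,h2⟩|⟨h0,h1,h2⟩|⟨h0,h1,h2⟩|⟨h0,h1,h2⟩|⟨h0,h1,h2⟩|⟨h0,h1,h2⟩ <;>
      rw [h0, h1, h2] <;>
      simp [coeff_add, coeff_monomial, MM_eq_iff]
  · have hz : coeff (MM n0 n1 n2) t = 0 := by
      apply ht.coeff_eq_zero
      rw [degree_MM]; exact h
    rw [hz, coeff_add, coeff_add, coeff_add, coeff_add, coeff_add]
    simp only [coeff_monomial, MM_eq_iff]
    have : ∀ i j k : ℕ, i + j + k = 2 → ¬(i = n0 ∧ j = n1 ∧ k = n2) := by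
      rintro i j k hijk ⟨rfl, rfl, rfl⟩; exact h hijk
    rw [if_neg (this 2 0 0 rfl), if_neg (this 1 1 0 rfl), if_neg (this 1 0 1 rfl),
      if_neg (this 0 2 0 rfl), if_neg (this 0 1 1 rfl), if_neg (this 0 0 2 rfl)]
    ring

lemma eval_MM (y : Fin 3 → ℝ) (i j k : ℕ) (r : ℝ) :
    eval y (monomial (MM i j k) r) = r * y 0 ^ i * y 1 ^ j * y 2 ^ k := by
  rw [eval_monomial]
  rw [MM]
  rw [Finsupp.prod_add_index (by simp) (by intros; rw [pow_add]),
    Finsupp.prod_add_index (by simp) (by intros; rw [pow_add])]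
  rw [Finsupp.prod_single_index (by simp), Finsupp.prod_single_index (by simp),
    Finsupp.prod_single_index (by simp)]
  ring

theorem stmt_13 :
    ¬ ∃ t : MvPolynomial (Fin 3) ℝ, t.IsHomogeneous 2 ∧
      (∀ y : Fin 3 → ℝ, 0 ≤ eval y t) ∧
      ∀ y : Fin 3 → ℝ,
        0 ≤ (y 0) ^ 3 * y 2 + (y 0) ^ 3 * y 1 + (y 1) ^ 2 * (y 2) ^ 2
          - eval y t * (y 0 * y 2 + y 1 * y 2 + y 0 * y 1) := by
  rintro ⟨t, ht, h1, h2⟩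
  set a := coeff (MM 2 0 0) t with ha
  set b := coeff (MM 1 1 0) t with hb
  set c := coeff (MM 1 0 1) t with hc
  set d := coeff (MM 0 2 0) t with hdd
  set e := coeff (MM 0 1 1) t with he
  set k := coeff (MM 0 0 2) t with hk
  have hF : ∀ y : Fin 3 → ℝ, eval y t
      = a * y 0 ^ 2 + b * (y 0 * y 1) + c * (y 0 * y 2) + d * y 1 ^ 2
        + e * (y 1 * y 2) + k * y 2 ^ 2 := by
    intro y
    conv_lhs => rw [decomp t ht]
    simp only [eval_add, eval_MM, ← ha, ← hb, ← hc, ← hdd, ← he, ← hk]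
    ring
  -- d ≥ 0, k ≥ 0
  have hd0 : 0 ≤ d := by have := h1 ![0,1,0]; rw [hF] at this; norm_num [Matrix.cons_val_two, Matrix.tail_cons, Matrix.head_cons] at this; linarith
  have hk0 : 0 ≤ k := by have := h1 ![0,0,1]; rw [hF] at this; norm_num [Matrix.cons_val_two, Matrix.tail_cons, Matrix.head_cons] at this; linarith
  -- d = 0
  have hdz : d = 0 := by
    by_contra hne
    have hdpos : 0 < d := lt_of_le_of_ne hd0 (Ne.symm hne)
    obtain ⟨L, hL⟩ : ∃ L : ℝ, L = (2 + |e| + |k|) / d + 1 := ⟨_, rfl⟩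
    have hq : 0 ≤ (2 + |e| + |k|) / d := by positivity
    have hL1 : 1 ≤ L := by rw [hL]; linarith
    have hdL : d * L = 2 + |e| + |k| + d := by
      rw [hL]; field_simp
    have := h2 ![0, L, 1]
    rw [hF] at this
    norm_num [Matrix.cons_val_two, Matrix.tail_cons, Matrix.head_cons] at this
    -- 0 ≤ L^2 - (d L^2 + e L + k) * L
    nlinarith [le_abs_self e, neg_abs_le e, le_abs_self k, neg_abs_le k, abs_nonneg e,
      abs_nonneg k, sq_nonneg L, mul_pos hdpos (lt_of_lt_of_le zero_lt_one hL1)]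
  -- k = 0
  have hkz : k = 0 := by
    by_contra hne
    have hkpos : 0 < k := lt_of_le_of_ne hk0 (Ne.symm hne)
    obtain ⟨L, hL⟩ : ∃ L : ℝ, L = (2 + |e| + |d|) / k + 1 := ⟨_, rfl⟩
    have hq : 0 ≤ (2 + |e| + |d|) / k := by positivity
    have hL1 : 1 ≤ L := by rw [hL]; linarith
    have hkL : k * L = 2 + |e| + |d| + k := by
      rw [hL]; field_simp
    have := h2 ![0, 1, L]
    rw [hF] at this
    norm_num [Matrix.cons_val_two, Matrix.tail_cons, Matrix.head_cons] at this
    nlinarith [le_abs_self e, neg_abs_le e, le_abs_self d, neg_abs_le d, abs_nonneg e,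
      abs_nonneg d, sq_nonneg L, mul_pos hkpos (lt_of_lt_of_le zero_lt_one hL1)]
  -- e = 0
  have hez : e = 0 := by
    have hp := h1 ![0,1,1]
    have hm := h1 ![0,1,-1]
    rw [hF] at hp hm
    norm_num [Matrix.cons_val_two, Matrix.tail_cons, Matrix.head_cons] at hp hm
    linarith
  -- b = 0
  have hbz : b = 0 := by
    by_contra hne
    have := h1 ![1, -(a+1)/b, 0]
    rw [hF] at this
    norm_num [Matrix.cons_val_two, Matrix.tail_cons, Matrix.head_cons] at this
    have h3 : b * ((-1 + -a)/b) = -1 - a := by field_simp; ring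
    have h4 : d * ((-1 + -a)/b)^2 = 0 := by rw [hdz]; ring
    linarith [this, h3, h4]
  -- c = 0
  have hcz : c = 0 := by
    by_contra hne
    have := h1 ![1, 0, -(a+1)/c]
    rw [hF] at this
    norm_num [Matrix.cons_val_two, Matrix.tail_cons, Matrix.head_cons] at this
    have h3 : c * ((-1 + -a)/c) = -1 - a := by field_simp; ring
    have h4 : k * ((-1 + -a)/c)^2 = 0 := by rw [hkz]; ring
    linarith [this, h3, h4]
  -- a ≥ 1
  have ha1 : 1 ≤ a := by
    have := h2 ![1,-1,-1]
    rw [hF] at this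
    norm_num [hbz, hcz, hdz, hez, hkz, Matrix.cons_val_two, Matrix.tail_cons, Matrix.head_cons] at this
    linarith
  have := h2 ![2,1,1]
  rw [hF] at this
  norm_num [hbz, hcz, hdz, hez, hkz, Matrix.cons_val_two, Matrix.tail_cons, Matrix.head_cons] at this
  linarith
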